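/- Let H be an inner product space, a ∈ H a unit vector, ρ ∈ (0,1), and x_1,…,x_n ∈ H with ‖x_i − a‖ ≤ ρ for each i. Then √(1 − ρ²) · ∑_{i=1}^n ‖x_i‖ ≤ ‖∑_{i=1}^n x_i‖. -/

import Mathlib

open RCLike

theorem stmt_1 {𝕜 H : Type*} [RCLike 𝕜] [NormedAddCommGroup H] [InnerProductSpace 𝕜 H]
    (n : ℕ) (a : H) (ha : ‖a‖ = 1) (ρ : ℝ) (hρ0 : 0 < ρ) (hρ1 : ρ < 1)
    (x : ℕ → H) (h : ∀ i ∈ Finset.Icc 1 n, ‖x i - a‖ ≤ ρ) :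
    Real.sqrt (1 - ρ ^ 2) * ∑ i ∈ Finset.Icc 1 n, ‖x i‖ ≤
      ‖∑ i ∈ Finset.Icc 1 n, x i‖ := by
  set c := Real.sqrt (1 - ρ ^ 2) with hc
  have hρ2 : (0:ℝ) ≤ 1 - ρ ^ 2 := by nlinarith
  have hc2 : c ^ 2 = 1 - ρ ^ 2 := Real.sq_sqrt hρ2
  have key : ∀ i ∈ Finset.Icc 1 n, c * ‖x i‖ ≤ re (inner 𝕜 (x i) a : 𝕜) := by
    intro i hi
    have hb := h i hi
    have hsq : ‖x i - a‖ ^ 2 ≤ ρ ^ 2 := by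
      apply pow_le_pow_left₀ (norm_nonneg _) hb
    rw [@norm_sub_sq 𝕜] at hsq
    have h2 : (‖x i‖ - c) ^ 2 ≥ 0 := sq_nonneg _
    nlinarith [ha]
  calc c * ∑ i ∈ Finset.Icc 1 n, ‖x i‖
      = ∑ i ∈ Finset.Icc 1 n, c * ‖x i‖ := by rw [Finset.mul_sum]
    _ ≤ ∑ i ∈ Finset.Icc 1 n, re (inner 𝕜 (x i) a : 𝕜) := Finset.sum_le_sum key
    _ = re (inner 𝕜 (∑ i ∈ Finset.Icc 1 n, x i) a : 𝕜) := by
        rw [sum_inner, map_sum]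
    _ ≤ ‖∑ i ∈ Finset.Icc 1 n, x i‖ := by
        calc re (inner 𝕜 (∑ i ∈ Finset.Icc 1 n, x i) a : 𝕜)
            ≤ ‖∑ i ∈ Finset.Icc 1 n, x i‖ * ‖a‖ := re_inner_le_norm _ _
          _ = ‖∑ i ∈ Finset.Icc 1 n, x i‖ := by rw [ha, mul_one]
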